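/- For each b ≥ 0, the set Z_b = {(x,y) ∈ Aff₊(2) : (x-1) + by = 0} is a subgroup of Aff₊(2) (it equals the set of singularities of the linear vector field 𝒳(x,y) = ((x-1)+by)∂/∂y), and Z_b is a normal subgroup of Aff₊(2) if and only if b = 0. -/

import Mathlib

noncomputable section

/-- The connected 2-dimensional affine group `Aff₊(2)`, identified with
`{(x, y) : x > 0, y ∈ ℝ}` with product `(x,y)·(x',y') = (xx', xy' + y)`. -/
abbrev Aff : Type := {p : ℝ × ℝ // 0 < p.1}

namespace Aff

instance : Mul Aff :=
  ⟨fun p q => ⟨(p.val.1 * q.val.1, p.val.1 * q.val.2 + p.val.2),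
    mul_pos p.property q.property⟩⟩

instance : One Aff := ⟨⟨(1, 0), one_pos⟩⟩

instance : Inv Aff :=
  ⟨fun p => ⟨(p.val.1⁻¹, -p.val.2 / p.val.1), inv_pos.mpr p.property⟩⟩

theorem mul_def (p q : Aff) :
    (↑(p * q) : ℝ × ℝ) = (p.val.1 * q.val.1, p.val.1 * q.val.2 + p.val.2) := rfl

theorem one_def : ((1 : Aff) : ℝ × ℝ) = (1, 0) := rfl

theorem inv_def (p : Aff) : (↑(p⁻¹) : ℝ × ℝ) = (p.val.1⁻¹, -p.val.2 / p.val.1) := rfl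

instance : Group Aff where
  mul_assoc p q r := by
    apply Subtype.ext
    simp only [mul_def, Prod.ext_iff]
    constructor <;> ring
  one_mul p := by
    apply Subtype.ext
    simp only [mul_def, one_def, Prod.ext_iff]
    constructor <;> ring
  mul_one p := by
    apply Subtype.ext
    simp only [mul_def, one_def, Prod.ext_iff]
    constructor <;> ring
  inv_mul_cancel p := by
    apply Subtype.ext
    have hx : p.val.1 ≠ 0 := ne_of_gt p.property
    simp only [mul_def, inv_def, one_def, Prod.ext_iff]
    constructor <;> field_simp <;> ring

/-- The linear vector field associated to the derivation `D = [[0,0],[1,b]]`: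
`𝒳(x,y) = ((x-1) + by) ∂/∂y`, written in the coordinates `(∂/∂x, ∂/∂y)`. -/
def linVF (b : ℝ) (g : Aff) : ℝ × ℝ := (0, (g.val.1 - 1) + b * g.val.2)

/-- The set `Z_b = {(x,y) : (x-1) + by = 0}`. -/
def Zset (b : ℝ) : Set Aff := {g | (g.val.1 - 1) + b * g.val.2 = 0}

end Aff

/-- For `b ≥ 0`, the set `Z_b = {(x,y) : (x-1) + by = 0}`, which is
the set of singularities of the linear vector field `𝒳(x,y) = ((x-1)+by) ∂/∂y`,
is a subgroup of `Aff₊(2)`, and it is a normal subgroup if and only if `b = 0`. -/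
theorem aff_Zb_subgroup_and_normal_iff (b : ℝ) (hb : 0 ≤ b) :
    Aff.Zset b = {g : Aff | Aff.linVF b g = 0} ∧
    (∃ H : Subgroup Aff, (H : Set Aff) = Aff.Zset b ∧ (H.Normal ↔ b = 0)) := by
  constructor
  · ext g
    simp [Aff.Zset, Aff.linVF, Prod.ext_iff]
  · refine ⟨{ carrier := Aff.Zset b
              mul_mem' := ?_
              one_mem' := ?_
              inv_mem' := ?_ }, rfl, ?_, ?_⟩
    · rintro p q (hp : _ = 0) (hq : _ = 0)
      show (p * q).val.1 - 1 + b * (p * q).val.2 = 0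
      have : (p * q).val = (p.val.1 * q.val.1, p.val.1 * q.val.2 + p.val.2) := rfl
      rw [this]
      have : p.val.1 * q.val.1 - 1 + b * (p.val.1 * q.val.2 + p.val.2)
          = p.val.1 * (q.val.1 - 1 + b * q.val.2) + (p.val.1 - 1 + b * p.val.2) := by ring
      rw [this, hp, hq]; ring
    · show (1 : Aff).val.1 - 1 + b * (1 : Aff).val.2 = 0
      simp [Aff.one_def]
    · rintro p (hp : _ = 0)
      show (p⁻¹).val.1 - 1 + b * (p⁻¹).val.2 = 0
      have hx : p.val.1 ≠ 0 := ne_of_gt p.property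
      have : (p⁻¹).val = (p.val.1⁻¹, -p.val.2 / p.val.1) := rfl
      rw [this]
      field_simp
      linarith [hp]
    · -- Normal → b = 0
      intro hN
      by_contra hb0
      have hbpos : 0 < b := lt_of_le_of_ne hb (Ne.symm hb0)
      set t : ℝ := 1 / (2 * b) with ht
      have htpos : 0 < t := by positivity
      have h : Aff := ⟨(1/2, t), by norm_num⟩
      have hmem : (⟨(1/2, t), by norm_num⟩ : Aff) ∈ Aff.Zset b := by
        show (1/2 : ℝ) - 1 + b * t = 0
        field_simp [ht]
        rw [ht]; field_simp
        norm_num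
      have hz0 := hN.conj_mem _ hmem ⟨(1, 1), one_pos⟩
      have hz : (1*(1/2))*(1:ℝ)⁻¹ - 1 + b*((1*(1/2))*(-1/1) + (1*t+1)) = 0 := hz0
      rw [ht] at hz
      have hb' : b ≠ 0 := hb0
      field_simp at hz
      nlinarith
    · -- b = 0 → Normal
      intro hb0
      subst hb0
      constructor
      intro n hn g
      have hn' : n.val.1 - 1 + 0 * n.val.2 = 0 := hn
      have hn1 : n.val.1 = 1 := by linarith
      show (g * n * g⁻¹).val.1 - 1 + 0 * (g * n * g⁻¹).val.2 = 0
      have : (g * n * g⁻¹).val.1 = g.val.1 * n.val.1 * g.val.1⁻¹ := rfl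
      rw [this, hn1]
      have hx : g.val.1 ≠ 0 := ne_of_gt g.property
      field_simp
      ring

end
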